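/- arXiv:1512.08588 — 4 statements merged into one kernel-verified Lean document; each statement's English description precedes it below -/
import Mathlib

section
/- If $M$ is a Yetter-Drinfeld-Long bimodule over a finite-dimensional bialgebra $H$, then $M$ equipped with the $H\otimes H^*$-action $(h\otimes f)\cdot m = \langle f, m_{\langle 1\rangle}\rangle\, h\cdot m_{\langle 0\rangle}$ and $H\otimes H^*$-coaction $\rho(m) = \sum_i m_{(-1)}\otimes h^i\otimes m_{(0)}\cdot h_i$ satisfies the left-left Yetter-Drinfeld compatibility over $H\otimes H^*$: $(x_1\cdot m)_{[-1]} x_2 \otimes (x_1\cdot m)_{[0]} = x_1 m_{[-1]}\otimes x_2\cdot m_{[0]}$ for all $x\in H\otimes H^*$, $m\in M$. -/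
/- Common setup: Yetter-Drinfeld-Long bimodules over a bialgebra `H`, and
Yetter-Drinfeld modules over the tensor product bialgebra `H ⊗ H^*`. -/

open TensorProduct LinearMap Module

noncomputable section

namespace YDL

variable (k : Type) [Field k] (H : Type) [Ring H] [Bialgebra k H]
variable (M : Type) [AddCommGroup M] [Module k M]

/-- Data of an `H`-bimodule, `H`-bicomodule structure on `M`:
left action `aL`, right action `aR`, left coaction `cL`, right coaction `cR`. -/
structure LRData where
  aL : H ⊗[k] M →ₗ[k] M
  aR : M ⊗[k] H →ₗ[k] M
  cL : M →ₗ[k] H ⊗[k] M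
  cR : M →ₗ[k] M ⊗[k] H

variable {k H M}

/-- `M` is a left `H`-module. -/
structure IsLMod (D : LRData k H M) : Prop where
  one_act : ∀ m : M, D.aL (1 ⊗ₜ m) = m
  mul_act : ∀ (g h : H) (m : M), D.aL ((g * h) ⊗ₜ m) = D.aL (g ⊗ₜ D.aL (h ⊗ₜ m))

/-- `M` is a right `H`-module. -/
structure IsRMod (D : LRData k H M) : Prop where
  act_one : ∀ m : M, D.aR (m ⊗ₜ 1) = m
  act_mul : ∀ (m : M) (g h : H), D.aR (m ⊗ₜ (g * h)) = D.aR (D.aR (m ⊗ₜ g) ⊗ₜ h)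

/-- `M` is a left `H`-comodule. -/
structure IsLCom (D : LRData k H M) : Prop where
  coassoc : (TensorProduct.assoc k H H M).toLinearMap ∘ₗ map Coalgebra.comul LinearMap.id ∘ₗ D.cL
      = map LinearMap.id D.cL ∘ₗ D.cL
  counit : (TensorProduct.lid k M).toLinearMap ∘ₗ map Coalgebra.counit LinearMap.id ∘ₗ D.cL
      = LinearMap.id

/-- `M` is a right `H`-comodule. -/
structure IsRCom (D : LRData k H M) : Prop where
  coassoc : (TensorProduct.assoc k M H H).toLinearMap ∘ₗ map D.cR LinearMap.id ∘ₗ D.cR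
      = map LinearMap.id Coalgebra.comul ∘ₗ D.cR
  counit : (TensorProduct.rid k M).toLinearMap ∘ₗ map LinearMap.id Coalgebra.counit ∘ₗ D.cR
      = LinearMap.id

/-- Left-left Yetter-Drinfeld condition (1.1):
`(h₁·m)₍₋₁₎h₂ ⊗ (h₁·m)₍₀₎ = h₁m₍₋₁₎ ⊗ h₂·m₍₀₎`, as maps `H ⊗ M → H ⊗ M`. -/
def Cond1 (D : LRData k H M) : Prop :=
  map (LinearMap.mul' k H ∘ₗ (TensorProduct.comm k H H).toLinearMap) LinearMap.id ∘ₗ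
    (TensorProduct.assoc k H H M).symm.toLinearMap ∘ₗ
    map LinearMap.id (D.cL ∘ₗ D.aL) ∘ₗ
    (TensorProduct.assoc k H H M).toLinearMap ∘ₗ
    map ((TensorProduct.comm k H H).toLinearMap ∘ₗ Coalgebra.comul) LinearMap.id
  = map (LinearMap.mul' k H) D.aL ∘ₗ
    (tensorTensorTensorComm k H H H M).toLinearMap ∘ₗ map Coalgebra.comul D.cL

/-- Left-right Long condition (1.2): `(h·m)₍₀₎ ⊗ (h·m)₍₁₎ = h·m₍₀₎ ⊗ m₍₁₎`. -/
def Cond2 (D : LRData k H M) : Prop :=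
  D.cR ∘ₗ D.aL
  = map D.aL LinearMap.id ∘ₗ (TensorProduct.assoc k H M H).symm.toLinearMap ∘ₗ
      map LinearMap.id D.cR

/-- Right-right Yetter-Drinfeld condition (1.3):
`(m·h₂)₍₀₎ ⊗ h₁(m·h₂)₍₁₎ = m₍₀₎·h₁ ⊗ m₍₁₎h₂`, as maps `M ⊗ H → M ⊗ H`. -/
def Cond3 (D : LRData k H M) : Prop :=
  map LinearMap.id (LinearMap.mul' k H ∘ₗ (TensorProduct.comm k H H).toLinearMap) ∘ₗ
    (TensorProduct.assoc k M H H).toLinearMap ∘ₗ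
    map (D.cR ∘ₗ D.aR) LinearMap.id ∘ₗ
    (TensorProduct.assoc k M H H).symm.toLinearMap ∘ₗ
    map LinearMap.id ((TensorProduct.comm k H H).toLinearMap ∘ₗ Coalgebra.comul)
  = map D.aR (LinearMap.mul' k H) ∘ₗ
    (tensorTensorTensorComm k M H H H).toLinearMap ∘ₗ map D.cR Coalgebra.comul

/-- Right-left Long condition (1.4): `(m·h)₍₋₁₎ ⊗ (m·h)₍₀₎ = m₍₋₁₎ ⊗ m₍₀₎·h`. -/
def Cond4 (D : LRData k H M) : Prop :=
  D.cL ∘ₗ D.aR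
  = map LinearMap.id D.aR ∘ₗ (TensorProduct.assoc k H M H).toLinearMap ∘ₗ
      map D.cL LinearMap.id

/-- `M` with the data `D` is a Yetter-Drinfeld-Long bimodule: it is an `H`-bimodule
and an `H`-bicomodule satisfying the four compatibility conditions. -/
structure IsLR (D : LRData k H M) : Prop where
  lmod : IsLMod D
  rmod : IsRMod D
  lcom : IsLCom D
  rcom : IsRCom D
  bimod : ∀ (h h' : H) (m : M), D.aL (h ⊗ₜ D.aR (m ⊗ₜ h')) = D.aR (D.aL (h ⊗ₜ m) ⊗ₜ h')
  bicom : (TensorProduct.assoc k H M H).toLinearMap ∘ₗ map D.cL LinearMap.id ∘ₗ D.cR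
      = map LinearMap.id D.cR ∘ₗ D.cL
  cond1 : Cond1 D
  cond2 : Cond2 D
  cond3 : Cond3 D
  cond4 : Cond4 D

variable (k H M)

/-- The tensor product bialgebra `H ⊗ H^*` (as a vector space). -/
abbrev X := H ⊗[k] Module.Dual k H

/-- Convolution product on `H^*`: `⟨f*g, h⟩ = ⟨f,h₁⟩⟨g,h₂⟩`. -/
def convL : Module.Dual k H ⊗[k] Module.Dual k H →ₗ[k] Module.Dual k H :=
  (Coalgebra.comul (R := k) (A := H)).dualMap ∘ₗ TensorProduct.dualDistrib k H H

/-- Counit of `H^*`: evaluation at `1`. -/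
def εD : Module.Dual k H →ₗ[k] k := LinearMap.applyₗ (1 : H)

/-- Multiplication of the tensor product bialgebra `H ⊗ H^*`. -/
def μX : X k H ⊗[k] X k H →ₗ[k] X k H :=
  map (LinearMap.mul' k H) (convL k H) ∘ₗ
    (tensorTensorTensorComm k H (Module.Dual k H) H (Module.Dual k H)).toLinearMap

/-- Unit of `H ⊗ H^*`. -/
def oneX : X k H := 1 ⊗ₜ (Coalgebra.counit : Module.Dual k H)

/-- Counit of `H ⊗ H^*`. -/
def εX : X k H →ₗ[k] k := LinearMap.mul' k k ∘ₗ map Coalgebra.counit (εD k H)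

variable [FiniteDimensional k H]

/-- Comultiplication of `H^*` (for finite dimensional `H`): dual of multiplication. -/
def ΔD : Module.Dual k H →ₗ[k] Module.Dual k H ⊗[k] Module.Dual k H :=
  (TensorProduct.dualDistribEquiv k H H).symm.toLinearMap ∘ₗ (LinearMap.mul' k H).dualMap

/-- Comultiplication of the tensor product bialgebra `H ⊗ H^*`. -/
def ΔX : X k H →ₗ[k] X k H ⊗[k] X k H :=
  (tensorTensorTensorComm k H H (Module.Dual k H) (Module.Dual k H)).toLinearMap ∘ₗ
    map Coalgebra.comul (ΔD k H)

/-- The canonical element `∑ hᵢ ⊗ hⁱ ∈ H ⊗ H^*` (dual bases). -/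
def canel : H ⊗[k] Module.Dual k H := coevaluation k H 1

end YDL

end
namespace YDL

noncomputable section
open TensorProduct LinearMap Module

variable (k : Type) [Field k] (H : Type) [Ring H] [Bialgebra k H]
variable (M N P : Type) [AddCommGroup M] [Module k M] [AddCommGroup N] [Module k N]
  [AddCommGroup P] [Module k P]

/-- Data of a module-comodule structure on `M` over `H ⊗ H^*`. -/
structure YDData where
  act : X k H ⊗[k] M →ₗ[k] M
  coact : M →ₗ[k] X k H ⊗[k] M

variable {k H M N P}

/-- `M` is a left `H ⊗ H^*`-module (stated on pure tensors, which span `H ⊗ H^*`). -/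
structure IsXMod (E : YDData k H M) : Prop where
  one_act : ∀ m : M, E.act (oneX k H ⊗ₜ m) = m
  mul_act : ∀ (h h' : H) (f f' : Module.Dual k H) (m : M),
    E.act (((h * h') ⊗ₜ convL k H (f ⊗ₜ f')) ⊗ₜ m)
      = E.act ((h ⊗ₜ f) ⊗ₜ E.act ((h' ⊗ₜ f') ⊗ₜ m))

variable [FiniteDimensional k H]

/-- `M` is a left `H ⊗ H^*`-comodule. -/
structure IsXCom (E : YDData k H M) : Prop where
  coassoc : (TensorProduct.assoc k (X k H) (X k H) M).toLinearMap ∘ₗ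
      map (ΔX k H) LinearMap.id ∘ₗ E.coact = map LinearMap.id E.coact ∘ₗ E.coact
  counit : (TensorProduct.lid k M).toLinearMap ∘ₗ map (εX k H) LinearMap.id ∘ₗ E.coact
      = LinearMap.id

/-- The left-left Yetter-Drinfeld compatibility over `H ⊗ H^*`:
`(x₁·m)₍₋₁₎x₂ ⊗ (x₁·m)₍₀₎ = x₁m₍₋₁₎ ⊗ x₂·m₍₀₎`, as maps `(H ⊗ H^*) ⊗ M → (H ⊗ H^*) ⊗ M`. -/
def CondYD (E : YDData k H M) : Prop :=
  map (μX k H ∘ₗ (TensorProduct.comm k (X k H) (X k H)).toLinearMap) LinearMap.id ∘ₗ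
    (TensorProduct.assoc k (X k H) (X k H) M).symm.toLinearMap ∘ₗ
    map LinearMap.id (E.coact ∘ₗ E.act) ∘ₗ
    (TensorProduct.assoc k (X k H) (X k H) M).toLinearMap ∘ₗ
    map ((TensorProduct.comm k (X k H) (X k H)).toLinearMap ∘ₗ ΔX k H) LinearMap.id
  = map (μX k H) E.act ∘ₗ
    (tensorTensorTensorComm k (X k H) (X k H) (X k H) M).toLinearMap ∘ₗ map (ΔX k H) E.coact

/-- `M` is a left-left Yetter-Drinfeld module over `H ⊗ H^*`. -/
structure IsYD (E : YDData k H M) : Prop where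
  xmod : IsXMod E
  xcom : IsXCom E
  yd : CondYD E

/-! ### The functor `F : 𝓛𝓡(H) → ᴴ⊗ᴴ*YD` -/

/-- `f ⊗ m ↦ ⟨f, m₍₁₎⟩ m₍₀₎`, built from a right coaction `cR`. -/
def evR (cR : M →ₗ[k] M ⊗[k] H) : Module.Dual k H ⊗[k] M →ₗ[k] M :=
  (TensorProduct.lid k M).toLinearMap ∘ₗ map (contractLeft k H) LinearMap.id ∘ₗ
    (TensorProduct.assoc k (Module.Dual k H) H M).symm.toLinearMap ∘ₗ
    map LinearMap.id ((TensorProduct.comm k M H).toLinearMap ∘ₗ cR)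

/-- The `H ⊗ H^*`-action `(h ⊗ f) · m = ⟨f, m₍₁₎⟩ h · m₍₀₎` (formula (2.1)). -/
def Fact (D : LRData k H M) : X k H ⊗[k] M →ₗ[k] M :=
  D.aL ∘ₗ map LinearMap.id (evR D.cR) ∘ₗ
    (TensorProduct.assoc k H (Module.Dual k H) M).toLinearMap

/-- `m ↦ ∑ hⁱ ⊗ m · hᵢ`, built from a right action `aR`. -/
def insD (aR : M ⊗[k] H →ₗ[k] M) : M →ₗ[k] Module.Dual k H ⊗[k] M :=
  map LinearMap.id (aR ∘ₗ (TensorProduct.comm k H M).toLinearMap) ∘ₗ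
    (TensorProduct.assoc k (Module.Dual k H) H M).toLinearMap ∘ₗ
    TensorProduct.mk k (Module.Dual k H ⊗[k] H) M
      ((TensorProduct.comm k H (Module.Dual k H)) (canel k H))

/-- The `H ⊗ H^*`-coaction `ρ(m) = ∑ m₍₋₁₎ ⊗ hⁱ ⊗ m₍₀₎ · hᵢ` (formula (2.2)). -/
def Fco (D : LRData k H M) : M →ₗ[k] X k H ⊗[k] M :=
  (TensorProduct.assoc k H (Module.Dual k H) M).symm.toLinearMap ∘ₗ
    map LinearMap.id (insD D.aR) ∘ₗ D.cL

/-- The functor `F` on objects. -/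
def Fdata (D : LRData k H M) : YDData k H M := ⟨Fact D, Fco D⟩

/-! ### The functor `G : ᴴ⊗ᴴ*YD → 𝓛𝓡(H)` -/

variable (k H)

/-- `h ↦ h ⊗ ε`. -/
def ιH : H →ₗ[k] X k H :=
  (TensorProduct.mk k H (Module.Dual k H)).flip (Coalgebra.counit : Module.Dual k H)

/-- `f ↦ 1 ⊗ f`. -/
def ιD : Module.Dual k H →ₗ[k] X k H := TensorProduct.mk k H (Module.Dual k H) 1

/-- `h ⊗ f ↦ ε*(f) h`. -/
def πH : X k H →ₗ[k] H := (TensorProduct.rid k H).toLinearMap ∘ₗ map LinearMap.id (εD k H)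

/-- `(h ⊗ f) ⊗ h' ↦ ε(h)⟨f, h'⟩`. -/
def ξX : X k H ⊗[k] H →ₗ[k] k :=
  LinearMap.mul' k k ∘ₗ map Coalgebra.counit (contractLeft k H) ∘ₗ
    (TensorProduct.assoc k H (Module.Dual k H) H).toLinearMap

variable {k H}

/-- The restricted left `H`-action `h · m = (h ⊗ ε) · m`. -/
def gL (A : X k H ⊗[k] M →ₗ[k] M) : H ⊗[k] M →ₗ[k] M := A ∘ₗ map (ιH k H) LinearMap.id

/-- The right `H`-action `m · h = ⟨(ε ⊗ id) m₍₋₁₎, h⟩ m₍₀₎`. -/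
def gR (C : M →ₗ[k] X k H ⊗[k] M) : M ⊗[k] H →ₗ[k] M :=
  (TensorProduct.lid k M).toLinearMap ∘ₗ map (ξX k H) LinearMap.id ∘ₗ
    (TensorProduct.assoc k (X k H) H M).symm.toLinearMap ∘ₗ
    map LinearMap.id (TensorProduct.comm k M H).toLinearMap ∘ₗ
    (TensorProduct.assoc k (X k H) M H).toLinearMap ∘ₗ map C LinearMap.id

/-- The left `H`-coaction `ρ_L(m) = (id ⊗ ε*)(m₍₋₁₎) ⊗ m₍₀₎`. -/
def gcL (C : M →ₗ[k] X k H ⊗[k] M) : M →ₗ[k] H ⊗[k] M := map (πH k H) LinearMap.id ∘ₗ C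

/-- The right `H`-coaction `ρ_R(m) = ∑ (1 ⊗ hⁱ) · m ⊗ hᵢ`. -/
def gcR (A : X k H ⊗[k] M →ₗ[k] M) : M →ₗ[k] M ⊗[k] H :=
  map (A ∘ₗ map (ιD k H) LinearMap.id) LinearMap.id ∘ₗ
    (TensorProduct.assoc k (Module.Dual k H) M H).symm.toLinearMap ∘ₗ
    map LinearMap.id (TensorProduct.comm k H M).toLinearMap ∘ₗ
    (TensorProduct.assoc k (Module.Dual k H) H M).toLinearMap ∘ₗ
    map (TensorProduct.comm k H (Module.Dual k H)).toLinearMap LinearMap.id ∘ₗ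
    TensorProduct.mk k (H ⊗[k] Module.Dual k H) M (canel k H)

/-- The functor `G` on objects. -/
def Gdata (E : YDData k H M) : LRData k H M :=
  ⟨gL E.act, gR E.coact, gcL E.coact, gcR E.act⟩

end

end YDL
namespace YDL

noncomputable section
open TensorProduct LinearMap Module

variable {k : Type} [Field k] {H : Type} [Ring H] [Bialgebra k H]
variable {M N P : Type} [AddCommGroup M] [Module k M] [AddCommGroup N] [Module k N]
  [AddCommGroup P] [Module k P]

/-- The tensor product of two Yetter-Drinfeld-Long bimodule structures, with diagonal
actions and codiagonal coactions. -/
def tensorLR (D : LRData k H M) (D' : LRData k H N) : LRData k H (M ⊗[k] N) where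
  aL := map D.aL D'.aL ∘ₗ (tensorTensorTensorComm k H H M N).toLinearMap ∘ₗ
    map Coalgebra.comul LinearMap.id
  aR := map D.aR D'.aR ∘ₗ (tensorTensorTensorComm k M N H H).toLinearMap ∘ₗ
    map LinearMap.id Coalgebra.comul
  cL := map (LinearMap.mul' k H) LinearMap.id ∘ₗ
    (tensorTensorTensorComm k H M H N).toLinearMap ∘ₗ map D.cL D'.cL
  cR := map LinearMap.id (LinearMap.mul' k H) ∘ₗ
    (tensorTensorTensorComm k M H N H).toLinearMap ∘ₗ map D.cR D'.cR

variable [FiniteDimensional k H]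

/-- The tensor product of two Yetter-Drinfeld module structures over `H ⊗ H^*`. -/
def tensorYD (E : YDData k H M) (E' : YDData k H N) : YDData k H (M ⊗[k] N) where
  act := map E.act E'.act ∘ₗ (tensorTensorTensorComm k (X k H) (X k H) M N).toLinearMap ∘ₗ
    map (ΔX k H) LinearMap.id
  coact := map (μX k H) LinearMap.id ∘ₗ
    (tensorTensorTensorComm k (X k H) M (X k H) N).toLinearMap ∘ₗ map E.coact E'.coact

/-- A linear map `φ : M → N` is a morphism of Yetter-Drinfeld-Long bimodules
(`H`-bilinear and `H`-bicolinear). -/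
def LRHom (D : LRData k H M) (D' : LRData k H N) (φ : M →ₗ[k] N) : Prop :=
  φ ∘ₗ D.aL = D'.aL ∘ₗ map LinearMap.id φ ∧
  φ ∘ₗ D.aR = D'.aR ∘ₗ map φ LinearMap.id ∧
  D'.cL ∘ₗ φ = map LinearMap.id φ ∘ₗ D.cL ∧
  D'.cR ∘ₗ φ = map φ LinearMap.id ∘ₗ D.cR

/-- A linear map `φ : M → N` is a morphism of Yetter-Drinfeld modules over `H ⊗ H^*`
(`H ⊗ H^*`-linear and colinear). -/
def YDHom (E : YDData k H M) (E' : YDData k H N) (φ : M →ₗ[k] N) : Prop :=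
  φ ∘ₗ E.act = E'.act ∘ₗ map LinearMap.id φ ∧
  E'.coact ∘ₗ φ = map LinearMap.id φ ∘ₗ E.coact

/-- The braiding of `𝓛𝓡(H)`: `m ⊗ n ↦ m₍₋₁₎·n₍₀₎ ⊗ m₍₀₎·n₍₁₎`. -/
def cLR (D : LRData k H M) (D' : LRData k H N) : M ⊗[k] N →ₗ[k] N ⊗[k] M :=
  map D'.aL D.aR ∘ₗ (tensorTensorTensorComm k H M N H).toLinearMap ∘ₗ map D.cL D'.cR

/-- The inverse braiding of `𝓛𝓡(H)` (`T` is the inverse of the antipode):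
`n ⊗ m ↦ m₍₀₎·S⁻¹(n₍₁₎) ⊗ S⁻¹(m₍₋₁₎)·n₍₀₎`. -/
def cLRinv (D : LRData k H M) (D' : LRData k H N) (T : H →ₗ[k] H) :
    N ⊗[k] M →ₗ[k] M ⊗[k] N :=
  map D.aR D'.aL ∘ₗ
    (TensorProduct.comm k (H ⊗[k] N) (M ⊗[k] H)).toLinearMap ∘ₗ
    (tensorTensorTensorComm k H M N H).toLinearMap ∘ₗ
    (TensorProduct.comm k (N ⊗[k] H) (H ⊗[k] M)).toLinearMap ∘ₗ
    map (map LinearMap.id T) (map T LinearMap.id) ∘ₗ map D'.cR D.cL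

/-- The braiding of the Yetter-Drinfeld category over `H ⊗ H^*`:
`m ⊗ n ↦ m₍₋₁₎·n ⊗ m₍₀₎`, built from the coaction on `M` and the action on `N`. -/
def cYD (C : M →ₗ[k] X k H ⊗[k] M) (A' : X k H ⊗[k] N →ₗ[k] N) : M ⊗[k] N →ₗ[k] N ⊗[k] M :=
  map A' LinearMap.id ∘ₗ (TensorProduct.assoc k (X k H) N M).symm.toLinearMap ∘ₗ
    map LinearMap.id (TensorProduct.comm k M N).toLinearMap ∘ₗ
    (TensorProduct.assoc k (X k H) M N).toLinearMap ∘ₗ map C LinearMap.id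

end

end YDL
namespace YDL
open TensorProduct LinearMap Module


section Aux
open Coalgebra
set_option linter.unusedSectionVars false
set_option synthInstance.maxHeartbeats 1000000
set_option maxHeartbeats 4000000

variable {k : Type} [Field k] {H : Type} [Ring H] [Bialgebra k H]
    [FiniteDimensional k H] {M : Type} [AddCommGroup M] [Module k M]

noncomputable def Ec (c : H) (V : Type) [AddCommGroup V] [Module k V] :
    X k H ⊗[k] V →ₗ[k] H ⊗[k] V :=
  map ((TensorProduct.rid k H).toLinearMap ∘ₗ LinearMap.lTensor H (LinearMap.applyₗ c)) LinearMap.id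

@[simp] lemma Ec_tmul (c a : H) (g : Module.Dual k H) {V : Type} [AddCommGroup V] [Module k V]
    (v : V) : Ec (k := k) c V ((a ⊗ₜ g) ⊗ₜ v) = g c • (a ⊗ₜ v) := by
  simp [Ec]
  rfl

lemma dualSum (g : Module.Dual k H) :
    ∑ t : Basis.ofVectorSpaceIndex k H,
      g (Basis.ofVectorSpace k H t) • (Basis.ofVectorSpace k H).coord t = g := by
  ext v
  simp only [LinearMap.coe_sum, Finset.sum_apply, LinearMap.smul_apply, Basis.coord_apply,
    smul_eq_mul, mul_comm]
  simp_rw [← smul_eq_mul, ← map_smul, ← map_sum, Basis.sum_repr]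

lemma sep {V : Type} [AddCommGroup V] [Module k V] (x y : X k H ⊗[k] V)
    (hxy : ∀ c : H, Ec (k := k) c V x = Ec c V y) : x = y := by
  have key : (∑ t : Basis.ofVectorSpaceIndex k H,
      (map ((TensorProduct.mk k H (Module.Dual k H)).flip ((Basis.ofVectorSpace k H).coord t))
        LinearMap.id) ∘ₗ (Ec (k := k) (Basis.ofVectorSpace k H t) V)) = LinearMap.id := by
    ext a g v
    simp only [TensorProduct.AlgebraTensorModule.curry_apply, curry_apply,
      LinearMap.coe_restrictScalars, LinearMap.coe_sum, Finset.sum_apply, LinearMap.coe_comp,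
      Function.comp_apply, Ec_tmul, map_tmul, LinearMap.id_coe, id_eq, map_smul,
      LinearMap.flip_apply, mk_apply]
    simp only [TensorProduct.smul_tmul', TensorProduct.smul_tmul]
    rw [← TensorProduct.sum_tmul, ← TensorProduct.tmul_sum, dualSum]
  have recon : ∀ z : X k H ⊗[k] V,
      ∑ t : Basis.ofVectorSpaceIndex k H,
        (map ((TensorProduct.mk k H (Module.Dual k H)).flip ((Basis.ofVectorSpace k H).coord t))
          LinearMap.id) (Ec (Basis.ofVectorSpace k H t) V z) = z := by
    intro z
    conv_rhs => rw [← LinearMap.id_apply (R := k) z, ← key]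
    simp
  rw [← recon x, ← recon y]
  exact Finset.sum_congr rfl fun t _ => by rw [hxy]

local notation "bH" => Basis.ofVectorSpace k H
local notation "ıH" => Basis.ofVectorSpaceIndex k H

lemma Fact_tmul (D : LRData k H M) (a : H) (g : Module.Dual k H) (n : M) :
    Fact D ((a ⊗ₜ g) ⊗ₜ n) = D.aL (a ⊗ₜ evR D.cR (g ⊗ₜ n)) := by
  simp [Fact]

lemma evR_rep (cc : M →ₗ[k] M ⊗[k] H) (g : Module.Dual k H) (n : M) (S : Finset (M × H))
    (hS : cc n = ∑ s ∈ S, s.1 ⊗ₜ s.2) :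
    evR cc (g ⊗ₜ n) = ∑ s ∈ S, g s.2 • s.1 := by
  simp [evR, hS, map_sum, tmul_sum]

lemma insD_apply (ar : M ⊗[k] H →ₗ[k] M) (n : M) :
    insD ar n = ∑ t : ıH, (bH).coord t ⊗ₜ ar (n ⊗ₜ bH t) := by
  simp [insD, canel, coevaluation_apply_one, map_sum]

lemma Fco_rep (D : LRData k H M) (n : M) (T : Finset (H × M))
    (hT : D.cL n = ∑ w ∈ T, w.1 ⊗ₜ w.2) :
    Fco D n = ∑ w ∈ T, ∑ t : ıH, (w.1 ⊗ₜ (bH).coord t) ⊗ₜ D.aR (w.2 ⊗ₜ bH t) := by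
  simp [Fco, hT, map_sum, insD_apply, tmul_sum]

lemma ΔX_rep (a : H) (f : Module.Dual k H) (ra : Coalgebra.Repr k a (H × H))
    (Q : Finset (Module.Dual k H × Module.Dual k H)) (hQ : ΔD k H f = ∑ q ∈ Q, q.1 ⊗ₜ q.2) :
    ΔX k H (a ⊗ₜ f) = ∑ i ∈ ra.index, ∑ q ∈ Q, (ra.left i ⊗ₜ q.1) ⊗ₜ (ra.right i ⊗ₜ q.2) := by
  simp [ΔX, hQ, ← ra.eq, map_sum, sum_tmul, tmul_sum]
  rw [Finset.sum_comm]

lemma μX_tmul (a a' : H) (g g' : Module.Dual k H) :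
    μX k H ((a ⊗ₜ g) ⊗ₜ (a' ⊗ₜ g')) = (a * a') ⊗ₜ convL k H (g ⊗ₜ g') := by
  simp [μX]

lemma convL_apply_rep (g g' : Module.Dual k H) (c : H) (rc : Coalgebra.Repr k c (H × H)) :
    convL k H (g ⊗ₜ g') c = ∑ j ∈ rc.index, g (rc.left j) * g' (rc.right j) := by
  simp [convL, ← rc.eq, map_sum]

lemma pairD (f : Module.Dual k H) (Q : Finset (Module.Dual k H × Module.Dual k H))
    (hQ : ΔD k H f = ∑ q ∈ Q, q.1 ⊗ₜ q.2) (a a' : H) :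
    ∑ q ∈ Q, q.1 a * q.2 a' = f (a * a') := by
  have h2 : TensorProduct.dualDistrib k H H (ΔD k H f) = (LinearMap.mul' k H).dualMap f := by
    show (dualDistribEquiv k H H) (ΔD k H f) = _
    rw [ΔD]
    simp only [LinearEquiv.coe_coe, LinearMap.coe_comp, Function.comp_apply,
      LinearEquiv.apply_symm_apply]
  have h1 := congrFun (congrArg (fun φ => φ.toFun) h2) (a ⊗ₜ a')
  rw [hQ] at h1
  simpa [map_sum] using h1

lemma collB {W : Type} [AddCommGroup W] [Module k W] (v : H) (g : H →ₗ[k] W) :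
    ∑ t : ıH, (bH).coord t v • g (bH t) = g v := by
  simp_rw [Basis.coord_apply, ← map_smul, ← map_sum, Basis.sum_repr]


noncomputable def Lmap (D : LRData k H M) (f : Module.Dual k H) (a1 a2 c1 c2 : H) :
    H ⊗[k] (M ⊗[k] H) →ₗ[k] H ⊗[k] M :=
  map (LinearMap.mulLeft k a1)
    ((TensorProduct.rid k M).toLinearMap ∘ₗ
      map (D.aL ∘ₗ TensorProduct.mk k H M a2 ∘ₗ D.aR ∘ₗ (TensorProduct.mk k M H).flip c1)
          (f ∘ₗ LinearMap.mulRight k c2))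

@[simp] lemma Lmap_tmul (D : LRData k H M) (f : Module.Dual k H) (a1 a2 c1 c2 a : H)
    (n : M) (d : H) :
    Lmap D f a1 a2 c1 c2 (a ⊗ₜ (n ⊗ₜ d))
      = f (d * c2) • ((a1 * a) ⊗ₜ D.aL (a2 ⊗ₜ D.aR (n ⊗ₜ c1))) := by
  simp [Lmap, tmul_smul]


noncomputable def Λmap (D : LRData k H M) (f : Module.Dual k H) (a1 a2 : H) :
    M ⊗[k] H →ₗ[k] H ⊗[k] M :=
  TensorProduct.mk k H M a1 ∘ₗ (TensorProduct.rid k M).toLinearMap ∘ₗ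
    map (D.aL ∘ₗ TensorProduct.mk k H M a2) f

@[simp] lemma Λmap_tmul (D : LRData k H M) (f : Module.Dual k H) (a1 a2 : H) (n : M) (d : H) :
    Λmap D f a1 a2 (n ⊗ₜ d) = f d • (a1 ⊗ₜ D.aL (a2 ⊗ₜ n)) := by
  simp [Λmap, tmul_smul]

lemma tcoll {W : Type} [AddCommGroup W] [Module k W] (c : H) (rc : Coalgebra.Repr k c (H × H))
    (g2 : Module.Dual k H) (A : H →ₗ[k] W) :
    ∑ t : ıH, (convL k H (((bH).coord t) ⊗ₜ g2)) c • A (bH t)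
      = ∑ j ∈ rc.index, g2 (rc.right j) • A (rc.left j) := by
  simp only [convL_apply_rep _ _ c rc, Finset.sum_smul]
  rw [Finset.sum_comm]
  refine Finset.sum_congr rfl fun j _ => ?_
  simp only [mul_comm ((bH).coord _ _), mul_smul]
  rw [← Finset.smul_sum, collB]

lemma tcoll' {W : Type} [AddCommGroup W] [Module k W] (c : H) (rc : Coalgebra.Repr k c (H × H))
    (g1 : Module.Dual k H) (A : H →ₗ[k] W) :
    ∑ t : ıH, (convL k H (g1 ⊗ₜ ((bH).coord t))) c • A (bH t)
      = ∑ j ∈ rc.index, g1 (rc.left j) • A (rc.right j) := by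
  simp only [convL_apply_rep _ _ c rc, Finset.sum_smul]
  rw [Finset.sum_comm]
  refine Finset.sum_congr rfl fun j _ => ?_
  simp only [mul_smul]
  rw [← Finset.smul_sum, collB]



end Aux

section Main
open Coalgebra
set_option linter.unusedSectionVars false
set_option synthInstance.maxHeartbeats 1000000
set_option maxHeartbeats 4000000

/-- for a Yetter-Drinfeld-Long bimodule `M`, the induced action and
coaction satisfy the left-left Yetter-Drinfeld compatibility over `H ⊗ H^*`. -/
theorem statement2 {k : Type} [Field k] {H : Type} [Ring H] [Bialgebra k H]
    [FiniteDimensional k H] {M : Type} [AddCommGroup M] [Module k M]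
    (D : LRData k H M) (hD : IsLR D) :
    CondYD (Fdata D) := by
  classical
  rw [CondYD]
  ext h f m
  simp only [TensorProduct.AlgebraTensorModule.curry_apply, curry_apply,
    LinearMap.coe_restrictScalars, LinearMap.coe_comp, Function.comp_apply]
  apply sep
  intro c
  obtain ⟨Q, hQ⟩ := TensorProduct.exists_finset (R := k) (ΔD k H f)
  set rh := Coalgebra.Repr.arbitrary k h with hrh
  set rc := Coalgebra.Repr.arbitrary k c with hrc
  choose CL hCL using fun n : M => TensorProduct.exists_finset (R := k) (D.cL n)
  choose CR hCR using fun n : M => TensorProduct.exists_finset (R := k) (D.cR n)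
  have evr : ∀ (n : M) (g : Module.Dual k H),
      evR D.cR (g ⊗ₜ n) = ∑ s ∈ CR n, g s.2 • s.1 :=
    fun n g => evR_rep D.cR g n (CR n) (hCR n)
  have fco : ∀ n : M, Fco D n = ∑ w ∈ CL n, ∑ t : Basis.ofVectorSpaceIndex k H,
      (w.1 ⊗ₜ (Basis.ofVectorSpace k H).coord t) ⊗ₜ D.aR (w.2 ⊗ₜ Basis.ofVectorSpace k H t) :=
    fun n => Fco_rep D n (CL n) (hCL n)
  -- derived conditions
  have c1e : ∀ s : M × H,
      ∑ i ∈ rh.index, ∑ z ∈ CL (D.aL (rh.left i ⊗ₜ s.1)), (z.1 * rh.right i) ⊗ₜ[k] z.2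
        = ∑ w ∈ CL s.1, ∑ i ∈ rh.index,
            (rh.left i * w.1) ⊗ₜ[k] D.aL (rh.right i ⊗ₜ w.2) := by
    intro s
    have h1 := hD.cond1
    unfold Cond1 at h1
    have h2 := LinearMap.congr_fun h1 (h ⊗ₜ s.1)
    simpa only [LinearMap.coe_comp, Function.comp_apply, LinearEquiv.coe_coe, map_tmul,
      LinearMap.id_coe, id_eq, ← rh.eq, sum_tmul, map_sum, comm_tmul, assoc_tmul,
      assoc_symm_tmul, tmul_sum, hCL, tensorTensorTensorComm_tmul, mul'_apply] using h2
  have c3e : ∀ p : H × M,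
      ∑ j ∈ rc.index, ∑ z ∈ CR (D.aR (p.2 ⊗ₜ rc.right j)), z.1 ⊗ₜ[k] (rc.left j * z.2)
        = ∑ j ∈ rc.index, ∑ z ∈ CR p.2,
            D.aR (z.1 ⊗ₜ rc.left j) ⊗ₜ[k] (z.2 * rc.right j) := by
    intro p
    have h1 := hD.cond3
    unfold Cond3 at h1
    have h2 := LinearMap.congr_fun h1 (p.2 ⊗ₜ c)
    simpa only [LinearMap.coe_comp, Function.comp_apply, LinearEquiv.coe_coe, map_tmul,
      LinearMap.id_coe, id_eq, ← rc.eq, sum_tmul, map_sum, comm_tmul, assoc_tmul,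
      assoc_symm_tmul, tmul_sum, hCR, tensorTensorTensorComm_tmul, mul'_apply] using h2
  have bce : ∑ s ∈ CR m, ∑ w ∈ CL s.1, w.1 ⊗ₜ[k] (w.2 ⊗ₜ[k] s.2)
      = ∑ p ∈ CL m, ∑ z ∈ CR p.2, p.1 ⊗ₜ[k] (z.1 ⊗ₜ[k] z.2) := by
    have h2 := LinearMap.congr_fun hD.bicom m
    simpa only [LinearMap.coe_comp, Function.comp_apply, LinearEquiv.coe_coe, map_tmul,
      LinearMap.id_coe, id_eq, hCL, hCR, sum_tmul, tmul_sum, map_sum, assoc_tmul] using h2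
  -- expand both sides
  conv_lhs => rw [Fdata]; simp only [map_tmul, LinearMap.coe_comp, Function.comp_apply,
    LinearEquiv.coe_coe, LinearMap.id_coe, id_eq, ΔX_rep h f rh Q hQ, map_sum, sum_tmul,
    tmul_sum, comm_tmul, assoc_tmul, Fact_tmul, evr, tmul_smul, map_smul, Finset.smul_sum]
  conv_lhs => simp only [fco, map_sum, map_smul, sum_tmul, tmul_sum, assoc_symm_tmul,
    comm_tmul, μX_tmul, Ec_tmul, tmul_smul, Finset.smul_sum, smul_smul, map_tmul,
    LinearMap.coe_comp, Function.comp_apply, LinearEquiv.coe_coe, LinearMap.id_coe, id_eq]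
  conv_rhs => rw [Fdata]; simp only [map_tmul, LinearMap.coe_comp, Function.comp_apply,
    LinearEquiv.coe_coe, LinearMap.id_coe, id_eq, ΔX_rep h f rh Q hQ, map_sum, sum_tmul,
    tmul_sum, tensorTensorTensorComm_tmul, μX_tmul, Fact_tmul, Ec_tmul, tmul_smul, map_smul,
    fco, Finset.smul_sum, smul_smul]

  -- abbreviations used implicitly: h1 i = rh.left i, h2 i = rh.right i, c1 j = rc.left j, c2 j = rc.right j
  trans (∑ i ∈ rh.index, ∑ q ∈ Q, ∑ s ∈ CR m, ∑ z ∈ CL (D.aL (rh.left i ⊗ₜ[k] s.1)),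
      q.1 s.2 • ∑ j ∈ rc.index, q.2 (rc.right j) •
        ((z.1 * rh.right i) ⊗ₜ[k] D.aR (z.2 ⊗ₜ[k] rc.left j)))
  · refine Finset.sum_congr rfl fun i _ => Finset.sum_congr rfl fun q _ =>
      Finset.sum_congr rfl fun s _ => Finset.sum_congr rfl fun z _ => ?_
    simp only [mul_smul]
    rw [← Finset.smul_sum]
    congr 1
    have hA : ∀ v : H, (TensorProduct.mk k H M (z.1 * rh.right i) ∘ₗ D.aR ∘ₗ
        TensorProduct.mk k M H z.2) v = (z.1 * rh.right i) ⊗ₜ[k] D.aR (z.2 ⊗ₜ[k] v) := by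
      intro v; simp
    simp only [← hA]
    exact tcoll c rc q.2 _
  trans (∑ i ∈ rh.index, ∑ s ∈ CR m, ∑ z ∈ CL (D.aL (rh.left i ⊗ₜ[k] s.1)), ∑ j ∈ rc.index,
      f (s.2 * rc.right j) • ((z.1 * rh.right i) ⊗ₜ[k] D.aR (z.2 ⊗ₜ[k] rc.left j)))
  · refine Finset.sum_congr rfl fun i _ => ?_
    rw [Finset.sum_comm]
    refine Finset.sum_congr rfl fun s _ => ?_
    rw [Finset.sum_comm]
    refine Finset.sum_congr rfl fun z _ => ?_
    simp only [Finset.smul_sum, smul_smul]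
    rw [Finset.sum_comm]
    refine Finset.sum_congr rfl fun j _ => ?_
    rw [← Finset.sum_smul, pairD f Q hQ]
  trans (∑ s ∈ CR m, ∑ j ∈ rc.index, ∑ w ∈ CL s.1, ∑ i ∈ rh.index,
      f (s.2 * rc.right j) •
        ((rh.left i * w.1) ⊗ₜ[k] D.aL (rh.right i ⊗ₜ[k] D.aR (w.2 ⊗ₜ[k] rc.left j))))
  · rw [Finset.sum_comm]
    refine Finset.sum_congr rfl fun s _ => ?_
    refine (Finset.sum_congr rfl fun i _ => Finset.sum_comm).trans ?_
    rw [Finset.sum_comm]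
    refine Finset.sum_congr rfl fun j _ => ?_
    have e1 := congrArg (fun u => f (s.2 * rc.right j) •
      (map (LinearMap.id (R := k) (M := H))
        (D.aR ∘ₗ (TensorProduct.mk k M H).flip (rc.left j))) u) (c1e s)
    simpa only [map_sum, map_tmul, LinearMap.id_coe, id_eq, LinearMap.coe_comp,
      Function.comp_apply, LinearMap.flip_apply, mk_apply, Finset.smul_sum,
      ← hD.bimod] using e1
  trans (∑ p ∈ CL m, ∑ j ∈ rc.index, ∑ z ∈ CR p.2, ∑ i ∈ rh.index,
      f (z.2 * rc.right j) •
        ((rh.left i * p.1) ⊗ₜ[k] D.aL (rh.right i ⊗ₜ[k] D.aR (z.1 ⊗ₜ[k] rc.left j))))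
  · have key := congrArg (fun u => ∑ j ∈ rc.index, ∑ i ∈ rh.index,
      (Lmap D f (rh.left i) (rh.right i) (rc.left j) (rc.right j)) u) bce
    simp only [map_sum, Lmap_tmul] at key
    calc ∑ s ∈ CR m, ∑ j ∈ rc.index, ∑ w ∈ CL s.1, ∑ i ∈ rh.index,
          f (s.2 * rc.right j) •
            ((rh.left i * w.1) ⊗ₜ[k] D.aL (rh.right i ⊗ₜ[k] D.aR (w.2 ⊗ₜ[k] rc.left j)))
        = ∑ j ∈ rc.index, ∑ i ∈ rh.index, ∑ s ∈ CR m, ∑ w ∈ CL s.1,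
          f (s.2 * rc.right j) •
            ((rh.left i * w.1) ⊗ₜ[k] D.aL (rh.right i ⊗ₜ[k] D.aR (w.2 ⊗ₜ[k] rc.left j))) := by
          rw [Finset.sum_comm]
          refine Finset.sum_congr rfl fun j _ => ?_
          refine (Finset.sum_congr rfl fun s _ => Finset.sum_comm).trans ?_
          rw [Finset.sum_comm]
      _ = ∑ j ∈ rc.index, ∑ i ∈ rh.index, ∑ p ∈ CL m, ∑ z ∈ CR p.2,
          f (z.2 * rc.right j) •
            ((rh.left i * p.1) ⊗ₜ[k] D.aL (rh.right i ⊗ₜ[k] D.aR (z.1 ⊗ₜ[k] rc.left j))) := key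
      _ = ∑ p ∈ CL m, ∑ j ∈ rc.index, ∑ z ∈ CR p.2, ∑ i ∈ rh.index,
          f (z.2 * rc.right j) •
            ((rh.left i * p.1) ⊗ₜ[k] D.aL (rh.right i ⊗ₜ[k] D.aR (z.1 ⊗ₜ[k] rc.left j))) := by
          refine (Finset.sum_congr rfl fun j _ => Finset.sum_comm).trans ?_
          rw [Finset.sum_comm]
          refine Finset.sum_congr rfl fun p _ => Finset.sum_congr rfl fun j _ =>
            Finset.sum_comm
  trans (∑ p ∈ CL m, ∑ i ∈ rh.index, ∑ j ∈ rc.index, ∑ z ∈ CR (D.aR (p.2 ⊗ₜ[k] rc.right j)),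
      f (rc.left j * z.2) • ((rh.left i * p.1) ⊗ₜ[k] D.aL (rh.right i ⊗ₜ[k] z.1)))
  · refine Finset.sum_congr rfl fun p _ => ?_
    symm
    calc ∑ i ∈ rh.index, ∑ j ∈ rc.index, ∑ z ∈ CR (D.aR (p.2 ⊗ₜ[k] rc.right j)),
          f (rc.left j * z.2) • ((rh.left i * p.1) ⊗ₜ[k] D.aL (rh.right i ⊗ₜ[k] z.1))
        = ∑ i ∈ rh.index, ∑ j ∈ rc.index, ∑ z ∈ CR p.2,
          f (z.2 * rc.right j) •
            ((rh.left i * p.1) ⊗ₜ[k] D.aL (rh.right i ⊗ₜ[k] D.aR (z.1 ⊗ₜ[k] rc.left j))) := by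
          refine Finset.sum_congr rfl fun i _ => ?_
          have e1 := congrArg (Λmap D f (rh.left i * p.1) (rh.right i)) (c3e p)
          simpa only [map_sum, Λmap_tmul] using e1
      _ = ∑ j ∈ rc.index, ∑ z ∈ CR p.2, ∑ i ∈ rh.index,
          f (z.2 * rc.right j) •
            ((rh.left i * p.1) ⊗ₜ[k] D.aL (rh.right i ⊗ₜ[k] D.aR (z.1 ⊗ₜ[k] rc.left j))) := by
          rw [Finset.sum_comm]
          refine Finset.sum_congr rfl fun j _ => ?_
          rw [Finset.sum_comm]
  trans (∑ p ∈ CL m, ∑ i ∈ rh.index, ∑ q ∈ Q, ∑ j ∈ rc.index,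
      q.1 (rc.left j) • ((rh.left i * p.1) ⊗ₜ[k]
        D.aL (rh.right i ⊗ₜ[k] evR D.cR (q.2 ⊗ₜ[k] D.aR (p.2 ⊗ₜ[k] rc.right j)))))
  · refine Finset.sum_congr rfl fun p _ => Finset.sum_congr rfl fun i _ => ?_
    symm
    rw [Finset.sum_comm]
    refine Finset.sum_congr rfl fun j _ => ?_
    have hT : ∀ u : M, (rh.left i * p.1) ⊗ₜ[k] D.aL (rh.right i ⊗ₜ[k] u)
        = (TensorProduct.mk k H M (rh.left i * p.1) ∘ₗ D.aL ∘ₗ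
            TensorProduct.mk k H M (rh.right i)) u := by intro u; simp
    have hE : ∀ g : Module.Dual k H,
        evR D.cR (g ⊗ₜ[k] D.aR (p.2 ⊗ₜ[k] rc.right j))
          = (evR D.cR ∘ₗ (TensorProduct.mk k (Module.Dual k H) M).flip
              (D.aR (p.2 ⊗ₜ[k] rc.right j))) g := by intro g; simp
    rw [show (∑ q ∈ Q, q.1 (rc.left j) • ((rh.left i * p.1) ⊗ₜ[k]
        D.aL (rh.right i ⊗ₜ[k] evR D.cR (q.2 ⊗ₜ[k] D.aR (p.2 ⊗ₜ[k] rc.right j)))))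
        = (TensorProduct.mk k H M (rh.left i * p.1) ∘ₗ D.aL ∘ₗ
            TensorProduct.mk k H M (rh.right i))
          ((evR D.cR ∘ₗ (TensorProduct.mk k (Module.Dual k H) M).flip
              (D.aR (p.2 ⊗ₜ[k] rc.right j))) (∑ q ∈ Q, q.1 (rc.left j) • q.2)) from ?_]
    · rw [show (∑ q ∈ Q, q.1 (rc.left j) • q.2) = f ∘ₗ LinearMap.mulLeft k (rc.left j) from ?_]
      · simp only [LinearMap.coe_comp, Function.comp_apply, LinearMap.flip_apply, mk_apply,
          evr, map_sum, map_smul, LinearMap.mulLeft_apply, Finset.smul_sum]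
      · ext v
        simp only [LinearMap.coe_sum, Finset.sum_apply, LinearMap.smul_apply, smul_eq_mul,
          LinearMap.coe_comp, Function.comp_apply, LinearMap.mulLeft_apply]
        exact pairD f Q hQ _ v
    · simp only [hT, hE, ← map_smul, ← map_sum]
  -- finally: RHS expansion matches
  symm
  refine Finset.sum_congr rfl fun p _ => ?_
  rw [Finset.sum_comm]
  refine Finset.sum_congr rfl fun i _ => ?_
  rw [Finset.sum_comm]
  refine Finset.sum_congr rfl fun q _ => ?_
  have hA : ∀ v : H, (TensorProduct.mk k H M (rh.left i * p.1) ∘ₗ D.aL ∘ₗ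
      TensorProduct.mk k H M (rh.right i) ∘ₗ evR D.cR ∘ₗ
      TensorProduct.mk k (Module.Dual k H) M q.2 ∘ₗ D.aR ∘ₗ TensorProduct.mk k M H p.2) v
      = (rh.left i * p.1) ⊗ₜ[k]
          D.aL (rh.right i ⊗ₜ[k] evR D.cR (q.2 ⊗ₜ[k] D.aR (p.2 ⊗ₜ[k] v))) := by
    intro v; simp
  simp only [← hA]
  exact tcoll' c rc q.1 _


end Main

end YDL
end

section
/- Let $M$ be a left-left Yetter-Drinfeld module over the tensor product bialgebra $H\otimes H^*$. Then the restricted actions $h\cdot m := (h\otimes\varepsilon)\cdot m$ and $m\cdot h := \langle(\varepsilon\otimes \mathrm{id})m_{[-1]}, h\rangle\, m_{[0]}$ make $M$ an $H$-bimodule, i.e. $(h\cdot m)\cdot h' = h\cdot(m\cdot h')$ for all $h,h'\in H$, $m\in M$. -/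
/- Common setup: Yetter-Drinfeld-Long bimodules over a bialgebra `H`, and
Yetter-Drinfeld modules over the tensor product bialgebra `H ⊗ H^*`. -/

open TensorProduct LinearMap Module

namespace YDL
open TensorProduct LinearMap Module
set_option synthInstance.maxHeartbeats 1000000
set_option maxHeartbeats 2000000
noncomputable section Aux
open TensorProduct LinearMap Module

variable {k : Type} [Field k] {H : Type} [Ring H] [Bialgebra k H]
variable {M N : Type} [AddCommMonoid M] [Module k M] [AddCommMonoid N] [Module k N]

lemma eps_eps_comul (a : H) :
    (LinearMap.mul' k k) ((map Coalgebra.counit Coalgebra.counit) (Coalgebra.comul (R := k) a))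
      = Coalgebra.counit (R := k) a := by
  have h1 : ∀ u : H ⊗[k] H, (LinearMap.mul' k k) ((map Coalgebra.counit Coalgebra.counit) u)
      = Coalgebra.counit (R := k)
          ((TensorProduct.lid k H) ((Coalgebra.counit (R := k) (A := H)).rTensor H u)) := by
    intro u
    induction u using TensorProduct.induction_on with
    | zero => simp
    | tmul a b => simp [LinearMap.mul'_apply, smul_eq_mul, mul_comm]
    | add x y hx hy => simp [map_add, hx, hy]
  rw [h1, Coalgebra.rTensor_counit_comul]
  simp

lemma dualDistrib_eps_right (f : Module.Dual k H) (u : H ⊗[k] H) :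
    TensorProduct.dualDistrib k H H (f ⊗ₜ (Coalgebra.counit : Module.Dual k H)) u
      = f ((TensorProduct.rid k H) ((Coalgebra.counit (R := k) (A := H)).lTensor H u)) := by
  induction u using TensorProduct.induction_on with
  | zero => simp
  | tmul a b => simp [TensorProduct.dualDistrib_apply, smul_eq_mul, mul_comm]
  | add x y hx hy => simp [map_add, hx, hy]

lemma dualDistrib_eps_left (f : Module.Dual k H) (u : H ⊗[k] H) :
    TensorProduct.dualDistrib k H H ((Coalgebra.counit : Module.Dual k H) ⊗ₜ f) u
      = f ((TensorProduct.lid k H) ((Coalgebra.counit (R := k) (A := H)).rTensor H u)) := by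
  induction u using TensorProduct.induction_on with
  | zero => simp
  | tmul a b => simp [TensorProduct.dualDistrib_apply, smul_eq_mul, mul_comm]
  | add x y hx hy => simp [map_add, hx, hy]

lemma convL_eps_right (f : Module.Dual k H) :
    convL k H (f ⊗ₜ (Coalgebra.counit : Module.Dual k H)) = f := by
  ext h
  have : convL k H (f ⊗ₜ (Coalgebra.counit : Module.Dual k H)) h
      = TensorProduct.dualDistrib k H H (f ⊗ₜ (Coalgebra.counit : Module.Dual k H))
          (Coalgebra.comul (R := k) h) := rfl
  rw [this, dualDistrib_eps_right, Coalgebra.lTensor_counit_comul]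
  simp

lemma convL_eps_left (f : Module.Dual k H) :
    convL k H ((Coalgebra.counit : Module.Dual k H) ⊗ₜ f) = f := by
  ext h
  have : convL k H ((Coalgebra.counit : Module.Dual k H) ⊗ₜ f) h
      = TensorProduct.dualDistrib k H H ((Coalgebra.counit : Module.Dual k H) ⊗ₜ f)
          (Coalgebra.comul (R := k) h) := rfl
  rw [this, dualDistrib_eps_left, Coalgebra.rTensor_counit_comul]
  simp

lemma xiX_tmul (a : H) (f : Module.Dual k H) (h : H) :
    ξX k H ((a ⊗ₜ f) ⊗ₜ h) = Coalgebra.counit (R := k) a * f h := by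
  simp [ξX, LinearMap.mul'_apply]

def psi (h : H) : X k H ⊗[k] M →ₗ[k] M :=
  (TensorProduct.lid k M).toLinearMap ∘ₗ
    map (ξX k H ∘ₗ (TensorProduct.mk k (X k H) H).flip h) LinearMap.id

lemma psi_tmul (h : H) (x : X k H) (n : M) : psi h (x ⊗ₜ n) = ξX k H (x ⊗ₜ h) • n := by
  simp [psi]

section
variable {M' : Type} [AddCommGroup M'] [Module k M']
lemma gL_apply (A : X k H ⊗[k] M' →ₗ[k] M') (h : H) (m : M') :
    gL A (h ⊗ₜ m) = A ((h ⊗ₜ (Coalgebra.counit : Module.Dual k H)) ⊗ₜ m) := by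
  simp [gL, ιH]

lemma gR_apply (C : M' →ₗ[k] X k H ⊗[k] M') (m : M') (h : H) :
    gR C (m ⊗ₜ h) = psi h (C m) := by
  unfold gR
  simp only [coe_comp, Function.comp_apply, map_tmul, id_coe, id_eq, LinearEquiv.coe_coe]
  generalize C m = c
  induction c using TensorProduct.induction_on with
  | zero => simp
  | tmul x n => simp [psi_tmul]
  | add x y hx hy => simp [add_tmul, map_add, hx, hy]

end

end Aux
noncomputable section Aux2
open TensorProduct LinearMap Module

variable {k : Type} [Field k] {H : Type} [Ring H] [Bialgebra k H]
variable {M N : Type} [AddCommMonoid M] [Module k M] [AddCommMonoid N] [Module k N]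

lemma xiX_one (x : X k H) : ξX k H (x ⊗ₜ (1 : H)) = εX k H x := by
  induction x using TensorProduct.induction_on with
  | zero => simp
  | tmul a f => simp [xiX_tmul, εX, εD, LinearMap.mul'_apply]
  | add x y hx hy => simp [add_tmul, hx, hy]

lemma psi_one (c : X k H ⊗[k] M) :
    psi (1 : H) c = (TensorProduct.lid k M) ((map (εX k H) LinearMap.id) c) := by
  induction c using TensorProduct.induction_on with
  | zero => simp
  | tmul x n => simp [psi_tmul, xiX_one]
  | add x y hx hy => simp [map_add, hx, hy]

lemma psi_comm (g : H) (L : M →ₗ[k] N) (c : X k H ⊗[k] M) :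
    L (psi g c) = psi g ((map LinearMap.id L) c) := by
  induction c using TensorProduct.induction_on with
  | zero => simp
  | tmul x n =>
    rw [map_tmul, id_coe, id_eq, psi_tmul, psi_tmul, map_smul]
  | add x y hx hy => simp [map_add, hx, hy]

variable [FiniteDimensional k H]

lemma deltaD_eps :
    ΔD k H (Coalgebra.counit : Module.Dual k H)
      = (Coalgebra.counit : Module.Dual k H) ⊗ₜ (Coalgebra.counit : Module.Dual k H) := by
  unfold ΔD
  simp only [coe_comp, LinearEquiv.coe_coe, Function.comp_apply]
  rw [LinearEquiv.symm_apply_eq]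
  ext a b
  simp [Bialgebra.counit_mul, LinearMap.mul'_apply]

lemma dualDistrib_deltaD (f : Module.Dual k H) :
    TensorProduct.dualDistrib k H H (ΔD k H f) = (LinearMap.mul' k H).dualMap f := by
  have h1 : ∀ y : Module.Dual k H ⊗[k] Module.Dual k H,
      TensorProduct.dualDistrib k H H y = TensorProduct.dualDistribEquiv k H H y := fun _ => rfl
  unfold ΔD
  simp only [coe_comp, LinearEquiv.coe_coe, Function.comp_apply]
  rw [h1, LinearEquiv.apply_symm_apply]

lemma deltaX_tmul (a : H) (f : Module.Dual k H) :
    ΔX k H (a ⊗ₜ f) = (tensorTensorTensorComm k H H (Module.Dual k H) (Module.Dual k H))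
      ((Coalgebra.comul (R := k) a) ⊗ₜ (ΔD k H f)) := by
  simp [ΔX]

lemma psi_psi (g h : H) (c : X k H ⊗[k] M) :
    psi h (psi g ((TensorProduct.assoc k (X k H) (X k H) M)
        ((map (ΔX k H) (LinearMap.id : M →ₗ[k] M)) c)))
      = psi (g * h) c := by
  induction c using TensorProduct.induction_on with
  | zero => simp
  | tmul x m =>
    induction x using TensorProduct.induction_on with
    | zero => simp
    | tmul a f =>
      simp only [map_tmul, id_coe, id_eq, deltaX_tmul]
      have key : ∀ (u : H ⊗[k] H) (v : Module.Dual k H ⊗[k] Module.Dual k H),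
          psi h (psi g ((TensorProduct.assoc k (X k H) (X k H) M)
              (((tensorTensorTensorComm k H H (Module.Dual k H) (Module.Dual k H)) (u ⊗ₜ v)) ⊗ₜ m)))
            = ((LinearMap.mul' k k) ((map Coalgebra.counit Coalgebra.counit) u)
                * TensorProduct.dualDistrib k H H v (g ⊗ₜ h)) • m := by
        intro u v
        induction u using TensorProduct.induction_on with
        | zero => simp
        | tmul a1 a2 =>
          induction v using TensorProduct.induction_on with
          | zero => simp
          | tmul f1 f2 =>
            simp only [tensorTensorTensorComm_tmul, TensorProduct.assoc_tmul, psi_tmul,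
              map_smul, xiX_tmul, TensorProduct.dualDistrib_apply, LinearMap.mul'_apply,
              map_tmul, smul_smul]
            ring_nf
          | add v1 v2 hv1 hv2 => simp [tmul_add, add_tmul, map_add, hv1, hv2, add_mul, mul_add, add_smul]
        | add u1 u2 hu1 hu2 => simp [add_tmul, map_add, hu1, hu2, add_mul, add_smul]
      rw [key, eps_eps_comul, dualDistrib_deltaD, psi_tmul, xiX_tmul]
      simp [LinearMap.mul'_apply]
    | add x y hx hy =>
      simp only [map_tmul, id_coe, id_eq] at hx hy
      simp [add_tmul, map_add, hx, hy]
  | add c1 c2 h1 h2 => simp [map_add, h1, h2]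

lemma xiX_mul_right (y : X k H) (b h' : H) :
    ξX k H ((μX k H (y ⊗ₜ (b ⊗ₜ (Coalgebra.counit : Module.Dual k H)))) ⊗ₜ h')
      = Coalgebra.counit (R := k) b * ξX k H (y ⊗ₜ h') := by
  induction y using TensorProduct.induction_on with
  | zero => simp
  | tmul a f =>
    simp [μX, tensorTensorTensorComm_tmul, convL_eps_right, xiX_tmul, Bialgebra.counit_mul]
    ring
  | add x y hx hy => simp [add_tmul, map_add, hx, hy, mul_add]

lemma xiX_mul_left (y : X k H) (b h' : H) :
    ξX k H ((μX k H ((b ⊗ₜ (Coalgebra.counit : Module.Dual k H)) ⊗ₜ y)) ⊗ₜ h')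
      = Coalgebra.counit (R := k) b * ξX k H (y ⊗ₜ h') := by
  induction y using TensorProduct.induction_on with
  | zero => simp
  | tmul a f =>
    simp [μX, tensorTensorTensorComm_tmul, convL_eps_left, xiX_tmul, Bialgebra.counit_mul]
    ring
  | add x y hx hy => simp [tmul_add, add_tmul, map_add, hx, hy, mul_add]

end Aux2
noncomputable section Aux3
open TensorProduct LinearMap Module

variable {k : Type} [Field k] {H : Type} [Ring H] [Bialgebra k H]
variable {M : Type} [AddCommMonoid M] [Module k M]
variable [FiniteDimensional k H]

lemma psi_rest (h' b : H) (c : X k H ⊗[k] M) :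
    psi h' ((map (μX k H ∘ₗ (TensorProduct.comm k (X k H) (X k H)).toLinearMap)
        (LinearMap.id : M →ₗ[k] M))
      ((TensorProduct.assoc k (X k H) (X k H) M).symm
        ((b ⊗ₜ (Coalgebra.counit : Module.Dual k H)) ⊗ₜ c)))
    = Coalgebra.counit (R := k) b • psi h' c := by
  induction c using TensorProduct.induction_on with
  | zero => simp
  | tmul y n =>
    simp [TensorProduct.assoc_symm_tmul, psi_tmul, xiX_mul_right, mul_smul]
  | add x y hx hy => simp [tmul_add, map_add, hx, hy]

lemma lhs_yd (A : X k H ⊗[k] M →ₗ[k] M) (C : M →ₗ[k] X k H ⊗[k] M) (h' : H) (m : M)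
    (u : H ⊗[k] H) :
    psi h' ((map (μX k H ∘ₗ (TensorProduct.comm k (X k H) (X k H)).toLinearMap)
        (LinearMap.id : M →ₗ[k] M))
      ((TensorProduct.assoc k (X k H) (X k H) M).symm
        ((map (LinearMap.id : X k H →ₗ[k] X k H) (C ∘ₗ A))
          ((TensorProduct.assoc k (X k H) (X k H) M)
            (((TensorProduct.comm k (X k H) (X k H))
              ((tensorTensorTensorComm k H H (Module.Dual k H) (Module.Dual k H))
                (u ⊗ₜ ((Coalgebra.counit : Module.Dual k H)
                    ⊗ₜ (Coalgebra.counit : Module.Dual k H))))) ⊗ₜ m)))))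
    = psi h' (C (A (((TensorProduct.rid k H)
        ((Coalgebra.counit (R := k) (A := H)).lTensor H u)
          ⊗ₜ (Coalgebra.counit : Module.Dual k H)) ⊗ₜ m))) := by
  induction u using TensorProduct.induction_on with
  | zero => simp
  | tmul b1 b2 =>
    simp only [tensorTensorTensorComm_tmul, TensorProduct.comm_tmul, TensorProduct.assoc_tmul,
      map_tmul, id_coe, id_eq, coe_comp, Function.comp_apply, LinearEquiv.coe_coe,
      LinearMap.lTensor_tmul, TensorProduct.rid_tmul]
    rw [psi_rest]
    rw [← smul_tmul', ← smul_tmul', map_smul, map_smul, map_smul]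
  | add u1 u2 h1 h2 => simp [add_tmul, map_add, tmul_add, h1, h2]

lemma rhs_yd (A : X k H ⊗[k] M →ₗ[k] M) (h' : H) (u : H ⊗[k] H) (c : X k H ⊗[k] M) :
    psi h' ((map (μX k H) A)
      ((tensorTensorTensorComm k (X k H) (X k H) (X k H) M)
        (((tensorTensorTensorComm k H H (Module.Dual k H) (Module.Dual k H))
            (u ⊗ₜ ((Coalgebra.counit : Module.Dual k H)
              ⊗ₜ (Coalgebra.counit : Module.Dual k H)))) ⊗ₜ c)))
    = A (((TensorProduct.lid k H) ((Coalgebra.counit (R := k) (A := H)).rTensor H u)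
        ⊗ₜ (Coalgebra.counit : Module.Dual k H)) ⊗ₜ psi h' c) := by
  induction u using TensorProduct.induction_on with
  | zero => simp
  | tmul b1 b2 =>
    induction c using TensorProduct.induction_on with
    | zero => simp
    | tmul y n =>
      simp only [tensorTensorTensorComm_tmul, map_tmul, LinearEquiv.coe_coe, psi_tmul,
        LinearMap.rTensor_tmul, TensorProduct.lid_tmul, xiX_mul_left]
      simp only [smul_tmul', tmul_smul, map_smul, smul_smul]
      rw [mul_comm, ← smul_tmul', ← smul_tmul', map_smul]
    | add c1 c2 h1 h2 =>
      simp only [tensorTensorTensorComm_tmul, LinearMap.rTensor_tmul,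
        TensorProduct.lid_tmul] at h1 h2
      simp [tmul_add, map_add, h1, h2]
  | add u1 u2 h1 h2 => simp [add_tmul, map_add, tmul_add, h1, h2]

end Aux3

/-- the restricted actions `h·m = (h ⊗ ε)·m` and
`m·h = ⟨(ε ⊗ id)m₍₋₁₎, h⟩m₍₀₎` make `M` an `H`-bimodule. -/
theorem statement3 {k : Type} [Field k] {H : Type} [Ring H] [Bialgebra k H]
    [FiniteDimensional k H] {M : Type} [AddCommGroup M] [Module k M]
    (E : YDData k H M) (hE : IsYD E) :
    IsLMod (Gdata E) ∧ IsRMod (Gdata E) ∧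
      ∀ (h h' : H) (m : M),
        (Gdata E).aL (h ⊗ₜ (Gdata E).aR (m ⊗ₜ h'))
          = (Gdata E).aR ((Gdata E).aL (h ⊗ₜ m) ⊗ₜ h') := by
  obtain ⟨hmod, hcom, hyd⟩ := hE
  refine ⟨⟨?_, ?_⟩, ⟨?_, ?_⟩, ?_⟩
  · intro m
    show gL E.act (1 ⊗ₜ m) = m
    rw [gL_apply]
    simpa [oneX] using hmod.one_act m
  · intro g h m
    show gL E.act ((g * h) ⊗ₜ m) = gL E.act (g ⊗ₜ gL E.act (h ⊗ₜ m))
    rw [gL_apply, gL_apply, gL_apply]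
    have := hmod.mul_act g h Coalgebra.counit Coalgebra.counit m
    rwa [convL_eps_right] at this
  · intro m
    show gR E.coact (m ⊗ₜ 1) = m
    rw [gR_apply, psi_one]
    simpa using LinearMap.congr_fun hcom.counit m
  · intro m g h
    show gR E.coact (m ⊗ₜ (g * h)) = gR E.coact (gR E.coact (m ⊗ₜ g) ⊗ₜ h)
    rw [gR_apply, gR_apply, gR_apply, psi_comm]
    have hco := LinearMap.congr_fun hcom.coassoc m
    simp only [coe_comp, Function.comp_apply, LinearEquiv.coe_coe] at hco
    rw [← hco, psi_psi]
  · intro h h' m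
    show gL E.act (h ⊗ₜ gR E.coact (m ⊗ₜ h')) = gR E.coact (gL E.act (h ⊗ₜ m) ⊗ₜ h')
    rw [gR_apply, gR_apply, gL_apply, gL_apply]
    have e := LinearMap.congr_fun hyd ((h ⊗ₜ (Coalgebra.counit : Module.Dual k H)) ⊗ₜ m)
    have e2 := congrArg (psi h') e
    simp only [coe_comp, Function.comp_apply, map_tmul, id_coe, id_eq,
      LinearEquiv.coe_coe] at e2
    rw [deltaX_tmul, deltaD_eps] at e2
    rw [lhs_yd, rhs_yd] at e2
    rw [Coalgebra.lTensor_counit_comul, Coalgebra.rTensor_counit_comul] at e2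
    simpa using e2.symm

end YDL
end

section
/- Let $M$ be a left-left Yetter-Drinfeld module over the tensor product bialgebra $H\otimes H^*$, with induced structures $h\cdot m = (h\otimes\varepsilon)\cdot m$, $m\cdot h = \langle(\varepsilon\otimes\mathrm{id})m_{[-1]},h\rangle m_{[0]}$, $\rho_L(m)=m_{(-1)}\otimes m_{(0)}=(\mathrm{id}\otimes\varepsilon^*)(m_{[-1]})\otimes m_{[0]}$, and $\rho_R(m)=m_{\langle 0\rangle}\otimes m_{\langle 1\rangle}=\sum_i(1\otimes h^i)\cdot m\otimes h_i$. Then the left-left Yetter-Drinfeld compatibility over $H$ holds: $(h_1\cdot m)_{(-1)}h_2\otimes(h_1\cdot m)_{(0)} = h_1 m_{(-1)}\otimes h_2\cdot m_{(0)}$. -/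
/- Common setup: Yetter-Drinfeld-Long bimodules over a bialgebra `H`, and
Yetter-Drinfeld modules over the tensor product bialgebra `H ⊗ H^*`. -/

open TensorProduct LinearMap Module

namespace YDL
open TensorProduct LinearMap Module


set_option synthInstance.maxHeartbeats 1000000
set_option maxHeartbeats 1000000

noncomputable section Aux5
variable {k : Type} [Field k] {H : Type} [Ring H] [Bialgebra k H]

lemma convL_apply_one (f g : Module.Dual k H) :
    convL k H (f ⊗ₜ[k] g) (1 : H) = f 1 * g 1 := by
  simp [convL, Bialgebra.comul_one, Algebra.TensorProduct.one_def]

lemma ιH_apply (h : H) :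
    ιH k H h = h ⊗ₜ[k] (Coalgebra.counit : Module.Dual k H) := rfl

lemma πH_apply (h : H) (f : Module.Dual k H) : πH k H (h ⊗ₜ[k] f) = f 1 • h := by
  simp [πH, εD]

lemma μX_apply (h h' : H) (f g : Module.Dual k H) :
    μX k H ((h ⊗ₜ[k] f) ⊗ₜ[k] (h' ⊗ₜ[k] g)) = (h * h') ⊗ₜ[k] convL k H (f ⊗ₜ[k] g) := by
  simp [μX]

lemma πH_μX_ιH (x : X k H) (b : H) :
    πH k H (μX k H (x ⊗ₜ[k] ιH k H b)) = πH k H x * b := by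
  induction x using TensorProduct.induction_on with
  | zero => simp
  | tmul c g =>
      rw [ιH_apply, μX_apply, πH_apply, πH_apply, convL_apply_one]
      simp [smul_mul_assoc]
  | add x y hx hy => simp only [add_tmul, map_add, hx, hy, LinearMap.add_apply, add_mul]

lemma ιH_μX_πH (a : H) (x : X k H) :
    πH k H (μX k H (ιH k H a ⊗ₜ[k] x)) = a * πH k H x := by
  induction x using TensorProduct.induction_on with
  | zero => simp
  | tmul c g =>
      rw [ιH_apply, μX_apply, πH_apply, πH_apply, convL_apply_one]
      simp [mul_smul_comm]
  | add x y hx hy => simp only [tmul_add, map_add, hx, hy, LinearMap.add_apply, mul_add]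

variable [FiniteDimensional k H]

lemma ΔD_counit : ΔD k H (Coalgebra.counit : Module.Dual k H)
    = (Coalgebra.counit : Module.Dual k H) ⊗ₜ[k] (Coalgebra.counit : Module.Dual k H) := by
  rw [ΔD, LinearMap.comp_apply, LinearEquiv.coe_coe, LinearEquiv.symm_apply_eq]
  apply TensorProduct.ext'
  intro a b
  simp [TensorProduct.dualDistribEquiv]

lemma ΔX_ιH (h : H) :
    ΔX k H (ιH k H h) = map (ιH k H) (ιH k H) (Coalgebra.comul h) := by
  rw [ΔX, LinearMap.comp_apply, LinearEquiv.coe_coe, ιH_apply, map_tmul, ΔD_counit]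
  induction Coalgebra.comul (R := k) h using TensorProduct.induction_on with
  | zero => simp
  | tmul a b => simp [ιH_apply]
  | add x y hx hy => simp only [add_tmul, map_add, hx, hy]

variable {M : Type} [AddCommGroup M] [Module k M]

lemma L_eq (E : YDData k H M) (h : H) (m : M) :
    (map (LinearMap.mul' k H ∘ₗ (TensorProduct.comm k H H).toLinearMap) LinearMap.id ∘ₗ
      (TensorProduct.assoc k H H M).symm.toLinearMap ∘ₗ
      map LinearMap.id ((Gdata E).cL ∘ₗ (Gdata E).aL) ∘ₗ
      (TensorProduct.assoc k H H M).toLinearMap ∘ₗ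
      map ((TensorProduct.comm k H H).toLinearMap ∘ₗ Coalgebra.comul) LinearMap.id)
      (h ⊗ₜ[k] m)
    = map (πH k H) LinearMap.id
        ((map (μX k H ∘ₗ (TensorProduct.comm k (X k H) (X k H)).toLinearMap) LinearMap.id ∘ₗ
          (TensorProduct.assoc k (X k H) (X k H) M).symm.toLinearMap ∘ₗ
          map LinearMap.id (E.coact ∘ₗ E.act) ∘ₗ
          (TensorProduct.assoc k (X k H) (X k H) M).toLinearMap ∘ₗ
          map ((TensorProduct.comm k (X k H) (X k H)).toLinearMap ∘ₗ ΔX k H) LinearMap.id)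
          (ιH k H h ⊗ₜ[k] m)) := by
  simp only [LinearMap.comp_apply, map_tmul, LinearEquiv.coe_coe, LinearMap.id_coe, id_eq,
    ΔX_ιH]
  induction Coalgebra.comul (R := k) h using TensorProduct.induction_on with
  | zero => simp
  | add x y hx hy =>
      simp only [map_add, add_tmul, LinearMap.add_apply, LinearEquiv.map_add, hx, hy]
  | tmul a b =>
      simp only [map_tmul, TensorProduct.comm_tmul, TensorProduct.assoc_tmul,
        LinearMap.id_coe, id_eq, LinearMap.comp_apply, Gdata, gL, gcL]
      simp only [map_tmul, LinearMap.id_coe, id_eq, ιH_apply]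
      induction E.coact (E.act ((a ⊗ₜ[k] (Coalgebra.counit : Module.Dual k H)) ⊗ₜ[k] m))
          using TensorProduct.induction_on with
      | zero => simp
      | add u v hu hv =>
          simp only [map_add, tmul_add, LinearMap.add_apply, LinearEquiv.map_add, hu, hv]
      | tmul x m' =>
          simp only [map_tmul, TensorProduct.assoc_symm_tmul, TensorProduct.comm_tmul,
            LinearMap.comp_apply, LinearMap.id_coe, id_eq, LinearEquiv.coe_coe,
            LinearMap.mul'_apply]
          rw [← ιH_apply, πH_μX_ιH]

lemma R_eq (E : YDData k H M) (h : H) (m : M) :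
    (map (LinearMap.mul' k H) (Gdata E).aL ∘ₗ
      (tensorTensorTensorComm k H H H M).toLinearMap ∘ₗ
      map Coalgebra.comul (Gdata E).cL) (h ⊗ₜ[k] m)
    = map (πH k H) LinearMap.id
        ((map (μX k H) E.act ∘ₗ
          (tensorTensorTensorComm k (X k H) (X k H) (X k H) M).toLinearMap ∘ₗ
          map (ΔX k H) E.coact) (ιH k H h ⊗ₜ[k] m)) := by
  simp only [LinearMap.comp_apply, map_tmul, LinearEquiv.coe_coe, ΔX_ιH, Gdata, gL, gcL]
  induction Coalgebra.comul (R := k) h using TensorProduct.induction_on with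
  | zero => simp
  | add x y hx hy =>
      simp only [map_add, add_tmul, LinearMap.add_apply, LinearEquiv.map_add, hx, hy]
  | tmul a b =>
      simp only [LinearMap.comp_apply, map_tmul, LinearMap.id_coe, id_eq]
      induction E.coact m using TensorProduct.induction_on with
      | zero => simp
      | add u v hu hv =>
          simp only [map_add, tmul_add, LinearMap.add_apply, LinearEquiv.map_add, hu, hv]
      | tmul x m' =>
          simp only [map_tmul, TensorProduct.tensorTensorTensorComm_tmul,
            LinearMap.comp_apply, LinearMap.id_coe, id_eq, LinearEquiv.coe_coe,
            LinearMap.mul'_apply]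
          rw [ιH_μX_πH]

end Aux5

/-- the induced structures on a Yetter-Drinfeld module over `H ⊗ H^*`
satisfy the left-left Yetter-Drinfeld compatibility over `H`. -/
theorem statement5 {k : Type} [Field k] {H : Type} [Ring H] [Bialgebra k H]
    [FiniteDimensional k H] {M : Type} [AddCommGroup M] [Module k M]
    (E : YDData k H M) (hE : IsYD E) :
    Cond1 (Gdata E) := by
  have h5 := hE.yd
  unfold CondYD at h5
  unfold Cond1
  apply TensorProduct.ext'
  intro h m
  rw [L_eq E h m, R_eq E h m, h5]

end YDL
end

section
/- Let $M$ be a left-left Yetter-Drinfeld module over the tensor product bialgebra $H\otimes H^*$, with induced structures as above. Then the left-right Long compatibility holds: $(h\cdot m)_{\langle 0\rangle}\otimes (h\cdot m)_{\langle 1\rangle} = h\cdot m_{\langle 0\rangle}\otimes m_{\langle 1\rangle}$ for all $h\in H$, $m\in M$. -/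
/- Common setup: Yetter-Drinfeld-Long bimodules over a bialgebra `H`, and
Yetter-Drinfeld modules over the tensor product bialgebra `H ⊗ H^*`. -/

open TensorProduct LinearMap Module

namespace YDL
open TensorProduct LinearMap Module

lemma convL_counit_right {k : Type} [Field k] {H : Type} [Ring H] [Bialgebra k H]
    (f : Module.Dual k H) :
    convL k H (f ⊗ₜ (Coalgebra.counit : Module.Dual k H)) = f := by
  have key : TensorProduct.dualDistrib k H H (f ⊗ₜ (Coalgebra.counit : Module.Dual k H))
      = f ∘ₗ (TensorProduct.rid k H).toLinearMap ∘ₗ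
        (Coalgebra.counit : H →ₗ[k] k).lTensor H := by
    apply TensorProduct.ext'
    intro a b
    simp [TensorProduct.dualDistrib_apply, TensorProduct.smul_tmul', mul_comm]
  ext h
  simp only [convL, LinearMap.comp_apply, LinearMap.dualMap_apply, key]
  rw [Coalgebra.lTensor_counit_comul]
  simp

lemma convL_counit_left {k : Type} [Field k] {H : Type} [Ring H] [Bialgebra k H]
    (f : Module.Dual k H) :
    convL k H ((Coalgebra.counit : Module.Dual k H) ⊗ₜ f) = f := by
  have key : TensorProduct.dualDistrib k H H ((Coalgebra.counit : Module.Dual k H) ⊗ₜ f)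
      = f ∘ₗ (TensorProduct.lid k H).toLinearMap ∘ₗ
        (Coalgebra.counit : H →ₗ[k] k).rTensor H := by
    apply TensorProduct.ext'
    intro a b
    simp [TensorProduct.dualDistrib_apply, TensorProduct.smul_tmul']
  ext h
  simp only [convL, LinearMap.comp_apply, LinearMap.dualMap_apply, key]
  rw [Coalgebra.rTensor_counit_comul]
  simp

lemma act_swap {k : Type} [Field k] {H : Type} [Ring H] [Bialgebra k H]
    {M : Type} [AddCommGroup M] [Module k M]
    {E : YDData k H M} (hE : IsXMod E) (h : H) (f : Module.Dual k H) (m : M) :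
    E.act ((1 ⊗ₜ f) ⊗ₜ E.act ((h ⊗ₜ (Coalgebra.counit : Module.Dual k H)) ⊗ₜ m))
      = E.act ((h ⊗ₜ (Coalgebra.counit : Module.Dual k H)) ⊗ₜ E.act ((1 ⊗ₜ f) ⊗ₜ m)) := by
  rw [← hE.mul_act, ← hE.mul_act, one_mul, mul_one, convL_counit_right, convL_counit_left]

set_option synthInstance.maxHeartbeats 800000 in
set_option maxHeartbeats 1600000 in
/-- the induced structures on a Yetter-Drinfeld module over `H ⊗ H^*`
satisfy the left-right Long compatibility. -/
theorem statement6 {k : Type} [Field k] {H : Type} [Ring H] [Bialgebra k H]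
    [FiniteDimensional k H] {M : Type} [AddCommGroup M] [Module k M]
    (E : YDData k H M) (hE : IsYD E) :
    Cond2 (Gdata E) := by
  apply TensorProduct.ext'
  intro h m
  simp only [Cond2, Gdata, gL, gcR, ιH, ιD, canel, LinearMap.comp_apply, map_tmul,
    LinearEquiv.coe_coe, TensorProduct.assoc_symm_tmul, LinearMap.id_coe, id_eq,
    TensorProduct.mk_apply, TensorProduct.comm_tmul, TensorProduct.assoc_tmul,
    LinearMap.flip_apply, coevaluation_apply_one]
  simp only [TensorProduct.sum_tmul, TensorProduct.tmul_sum, map_sum, map_tmul, TensorProduct.comm_tmul,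
    TensorProduct.assoc_tmul, TensorProduct.assoc_symm_tmul, LinearMap.comp_apply,
    LinearEquiv.coe_coe, LinearMap.id_coe, id_eq, TensorProduct.mk_apply]
  refine Finset.sum_congr rfl fun i _ => ?_
  rw [act_swap hE.xmod]
  rfl

end YDL
end
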